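/- Let F be an infinite field and E a cubic étale subalgebra of diagonal matrices in Mat₃(F). Then for any u₀ generating E (F[u₀] = E), there exists α ∈ F^× such that the element y := u₀ + α j₁ in the first Tits construction J(E, 1) = Mat₃(F)⁺ generates a cubic étale subalgebra F[y]; consequently Mat₃(F)⁺ is generated as a cubic Jordan algebra by two cubic étale subalgebras, namely E and F[y]. In particular, the discriminant polynomial Δ_y = Δ_{u₀} − C·α³ − 27α⁶ (for a constant C depending on u₀) is not identically zero as a polynomial in α, so a suitable α exists over any algebraically closed field. -/
import Mathlib


/-- The cyclic permutation matrix `P = j₁` realizing `Mat₃(F)⁺` as the first Tits construction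
`J(E,1) = E ⊕ E j₁ ⊕ E j₂` over the algebra `E` of diagonal matrices. -/
def cyc (F : Type) [Field F] : Matrix (Fin 3) (Fin 3) F :=
  Matrix.of fun i j => if j = i + 1 then 1 else 0

open Polynomial in
theorem exists_good_alpha (F : Type) [Field F] [Infinite F] (d : Fin 3 → F)
    (hd : Function.Injective d) :
    ∃ α : F, α ≠ 0 ∧ ((∏ i : Fin 3, (X - C (d i))) - C (α ^ 3)).Separable := by
  classical
  set p : F[X] := ∏ i : Fin 3, (X - C (d i)) with hp
  have hpm : p.Monic := monic_prod_of_monic _ _ fun i _ => monic_X_sub_C _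
  have hpdeg : p.natDegree = 3 := by
    rw [hp, natDegree_prod_of_monic _ _ fun i _ => monic_X_sub_C _]
    simp [natDegree_X_sub_C]
  have hpsep : p.Separable := separable_prod_X_sub_C_iff.2 hd
  have hp' : p.derivative ≠ 0 := by
    intro h0
    have : IsUnit p := (isCoprime_zero_right.1 (h0 ▸ hpsep))
    have := natDegree_eq_zero_of_isUnit this
    omega
  set K := AlgebraicClosure F
  set φ := algebraMap F K with hφ
  have hφinj : Function.Injective φ := RingHom.injective φ
  set h : K[X] := p.derivative.map φ with hh
  have hhne : h ≠ 0 := Polynomial.map_ne_zero hp'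
  set T : Set K := {x | ∃ r ∈ h.roots, x ^ 3 = (p.map φ).eval r} with hT
  have hTfin : T.Finite := by
    have : T ⊆ ⋃ r ∈ h.roots.toFinset, {x : K | (X ^ 3 - C ((p.map φ).eval r)).IsRoot x} := by
      intro x hx
      obtain ⟨r, hr, hxr⟩ := hx
      refine Set.mem_biUnion (Multiset.mem_toFinset.2 hr) ?_
      simp [IsRoot.def, hxr]
    refine Set.Finite.subset (Set.Finite.biUnion h.roots.toFinset.finite_toSet
      fun r _ => finite_setOf_isRoot (X_pow_sub_C_ne_zero (by norm_num) _)) this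
  have hBfin : ((φ ⁻¹' T) ∪ {0}).Finite :=
    (hTfin.preimage hφinj.injOn).union (Set.finite_singleton 0)
  obtain ⟨α, hα⟩ := hBfin.exists_notMem
  have hα0 : α ≠ 0 := fun h0 => hα (Or.inr h0)
  have hαB : φ α ∉ T := fun h0 => hα (Or.inl h0)
  refine ⟨α, hα0, ?_⟩
  set g : F[X] := p - C (α ^ 3) with hg
  have hdegC : (C (α ^ 3) : F[X]).degree < p.degree :=
    lt_of_le_of_lt degree_C_le (by rw [degree_eq_natDegree hpm.ne_zero, hpdeg]; norm_num)
  have hgm : g.Monic := hpm.sub_of_left hdegC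
  rw [← Polynomial.separable_map φ]
  have hqeq : g.map φ = p.map φ - C (φ α ^ 3) := by
    rw [hg, Polynomial.map_sub, Polynomial.map_C, map_pow]
  by_contra hns
  set q : K[X] := g.map φ with hq
  have hq' : q.derivative = h := by
    rw [show q = map φ p - C (φ α ^ 3) from hqeq, derivative_sub, derivative_C, sub_zero, hh, derivative_map]
  set G := EuclideanDomain.gcd q q.derivative with hG
  have hGu : ¬IsUnit G := fun hu => hns (EuclideanDomain.gcd_isUnit_iff.1 hu)
  have hqne : q ≠ 0 := (hgm.map φ).ne_zero
  have hGne : G ≠ 0 := by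
    intro h0
    exact hqne (EuclideanDomain.gcd_eq_zero_iff.1 h0).1
  have hGdeg : G.degree ≠ 0 := fun h0 => hGu (isUnit_iff_degree_eq_zero.2 h0)
  obtain ⟨x, hx⟩ := IsAlgClosed.exists_root G hGdeg
  have hx1 : q.eval x = 0 :=
    eval_eq_zero_of_dvd_of_eval_eq_zero (EuclideanDomain.gcd_dvd_left _ _) hx
  have hx2 : q.derivative.eval x = 0 :=
    eval_eq_zero_of_dvd_of_eval_eq_zero (EuclideanDomain.gcd_dvd_right _ _) hx
  apply hαB
  refine ⟨x, ?_, ?_⟩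
  · rw [mem_roots hhne]
    rw [hq'] at hx2
    exact hx2
  · rw [hqeq] at hx1
    simp only [eval_sub, eval_C] at hx1
    linear_combination -hx1


theorem diag_entry_aeval (F : Type) [Field F] (d : Fin 3 → F) (q : Polynomial F) (k : Fin 3) :
    (Polynomial.aeval (Matrix.diagonal d) q) k k = q.eval (d k) := by
  rw [Polynomial.aeval_eq_sum_range, Polynomial.eval_eq_sum_range]
  rw [Matrix.sum_apply]
  refine Finset.sum_congr rfl fun i _ => ?_
  rw [Matrix.smul_apply, Matrix.diagonal_pow, Matrix.diagonal_apply_eq, smul_eq_mul]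
  simp [Pi.pow_apply]

theorem key_cube (F : Type) [Field F] (d : Fin 3 → F) (α : F) :
    (Matrix.diagonal d + α • cyc F) * (Matrix.diagonal d + α • cyc F) *
        (Matrix.diagonal d + α • cyc F) =
      (d 0 + d 1 + d 2) • ((Matrix.diagonal d + α • cyc F) * (Matrix.diagonal d + α • cyc F))
        - (d 0 * d 1 + d 0 * d 2 + d 1 * d 2) • (Matrix.diagonal d + α • cyc F)
        + (d 0 * d 1 * d 2 + α ^ 3) • (1 : Matrix (Fin 3) (Fin 3) F) := by
  ext i j
  fin_cases i <;> fin_cases j <;>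
    simp [cyc, Matrix.mul_apply, Fin.sum_univ_three, Matrix.diagonal_apply, Matrix.one_apply,
      Matrix.add_apply, Matrix.smul_apply, smul_eq_mul] <;> ring


open Polynomial in
theorem stmt9_min (F : Type) [Field F] [Infinite F]
    (d : Fin 3 → F) (α : F) (hα0 : α ≠ 0)
    (hsep : ((∏ i : Fin 3, (X - C (d i))) - C (α ^ 3)).Separable)
    (li : LinearIndependent F ![(1 : Matrix (Fin 3) (Fin 3) F), Matrix.diagonal d + α • cyc F,
      (Matrix.diagonal d + α • cyc F) * (Matrix.diagonal d + α • cyc F)]) :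
    (minpoly F (Matrix.diagonal d + α • cyc F)).natDegree = 3 ∧
      (minpoly F (Matrix.diagonal d + α • cyc F)).Separable ∧
      Module.finrank F (Algebra.adjoin F {Matrix.diagonal d + α • cyc F}) = 3 := by
  classical
  set y : Matrix (Fin 3) (Fin 3) F := Matrix.diagonal d + α • cyc F with hy
  set s1 : F := d 0 + d 1 + d 2 with hs1
  set s2 : F := d 0 * d 1 + d 0 * d 2 + d 1 * d 2 with hs2
  set c0 : F := d 0 * d 1 * d 2 + α ^ 3 with hc0
  set g : F[X] := (∏ i : Fin 3, (X - C (d i))) - C (α ^ 3) with hg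
  have hgexp : g = X ^ 3 - C s1 * X ^ 2 + C s2 * X - C c0 := by
    rw [hg, Fin.prod_univ_three, hs1, hs2, hc0]
    simp only [C_add, C_mul, C_pow]
    ring
  have hpm : (∏ i : Fin 3, (X - C (d i)) : F[X]).Monic :=
    monic_prod_of_monic _ _ fun i _ => monic_X_sub_C _
  have hpdeg : (∏ i : Fin 3, (X - C (d i)) : F[X]).natDegree = 3 := by
    rw [natDegree_prod_of_monic _ _ fun i _ => monic_X_sub_C _]
    simp [natDegree_X_sub_C]
  have hgm : g.Monic := by
    rw [hg]
    refine hpm.sub_of_left (lt_of_le_of_lt degree_C_le ?_)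
    rw [degree_eq_natDegree hpm.ne_zero, hpdeg]
    norm_num
  have hgdeg : g.natDegree = 3 := by
    rw [hgexp]
    compute_degree!
  have hkey := key_cube F d α
  have e3 : y ^ 3 = y * y * y := by rw [pow_succ, pow_two]
  have e2 : y ^ 2 = y * y := pow_two y
  have haeval : aeval y g = 0 := by
    rw [hgexp]
    simp only [map_sub, map_add, map_mul, map_pow, aeval_X, aeval_C,
      Algebra.algebraMap_eq_smul_one, smul_one_mul]
    rw [e3, e2, hkey]
    abel
  have hint : IsIntegral F y := .of_finite F y
  have hmne : minpoly F y ≠ 0 := minpoly.ne_zero hint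
  have hdvd : minpoly F y ∣ g := minpoly.dvd F y haeval
  have hle : (minpoly F y).natDegree ≤ 3 := by
    have := natDegree_le_of_dvd hdvd hgm.ne_zero
    omega
  have hgt : ¬(minpoly F y).natDegree ≤ 2 := by
    intro hle2
    have h0 := minpoly.aeval F y
    rw [Polynomial.aeval_eq_sum_range' (lt_of_le_of_lt hle2 (by norm_num : (2:ℕ) < 3)) y] at h0
    rw [Finset.sum_range_succ, Finset.sum_range_succ, Finset.sum_range_one] at h0
    have hc := Fintype.linearIndependent_iff.1 li (fun i => (minpoly F y).coeff i) ?_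
    · have hz := hc ⟨(minpoly F y).natDegree, by omega⟩
      have hml : (minpoly F y).coeff (minpoly F y).natDegree = 1 :=
        (minpoly.monic hint).coeff_natDegree
      simp only at hz
      rw [hml] at hz
      exact one_ne_zero hz
    · rw [Fin.sum_univ_three]
      simpa [pow_zero, pow_one, e2] using h0
  have hm3 : (minpoly F y).natDegree = 3 := by omega
  have hmg : minpoly F y = g := by
    obtain ⟨c, hcg⟩ := hdvd
    have hcne : c ≠ 0 := by
      rintro rfl
      rw [mul_zero] at hcg
      exact hgm.ne_zero hcg
    have hdm := natDegree_mul hmne hcne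
    rw [← hcg, hgdeg, hm3] at hdm
    have hdc : c.natDegree = 0 := by omega
    have hcC : c = C (c.coeff 0) := eq_C_of_natDegree_eq_zero hdc
    have hlc : g.leadingCoeff = (minpoly F y).leadingCoeff * c.leadingCoeff := by
      rw [hcg, leadingCoeff_mul]
    rw [hgm.leadingCoeff, (minpoly.monic hint).leadingCoeff, one_mul] at hlc
    rw [hcC, leadingCoeff_C] at hlc
    rw [hcg, hcC, ← hlc, map_one, mul_one]
  refine ⟨hm3, by rw [hmg]; exact hsep, ?_⟩
  -- finrank
  set v : Fin 3 → Matrix (Fin 3) (Fin 3) F := ![1, y, y * y] with hv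
  set N : Submodule F (Matrix (Fin 3) (Fin 3) F) := Submodule.span F (Set.range v) with hN
  have h1N : (1 : Matrix (Fin 3) (Fin 3) F) ∈ N := Submodule.subset_span ⟨0, rfl⟩
  have hyN : y ∈ N := Submodule.subset_span ⟨1, rfl⟩
  have hyyN : y * y ∈ N := Submodule.subset_span ⟨2, rfl⟩
  have hpow : ∀ k : ℕ, y ^ k ∈ N := by
    intro k
    induction k using Nat.strong_induction_on with
    | _ k ih =>
      match k with
      | 0 => simpa using h1N
      | 1 => simpa using hyN
      | 2 => rw [pow_two]; exact hyyN
      | (n + 3) =>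
        have e : y ^ (n + 3) = s1 • y ^ (n + 2) - s2 • y ^ (n + 1) + c0 • y ^ n := by
          rw [pow_add, e3, hkey, mul_add, mul_sub]
          rw [mul_smul_comm, mul_smul_comm, mul_smul_comm, mul_one]
          rw [show y ^ n * (y * y) = y ^ (n + 2) by rw [← pow_two, ← pow_add],
            show y ^ n * y = y ^ (n + 1) by rw [← pow_succ]]
        rw [e]
        exact N.add_mem
          (N.sub_mem (N.smul_mem _ (ih _ (by omega))) (N.smul_mem _ (ih _ (by omega))))
          (N.smul_mem _ (ih _ (by omega)))
  have hadj : Subalgebra.toSubmodule (Algebra.adjoin F {y}) = N := by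
    apply le_antisymm
    · intro z hz
      rw [Subalgebra.mem_toSubmodule, Algebra.adjoin_singleton_eq_range_aeval] at hz
      obtain ⟨q, rfl⟩ := (AlgHom.mem_range _).1 hz
      rw [Polynomial.aeval_eq_sum_range]
      exact Submodule.sum_mem _ fun i _ => N.smul_mem _ (hpow i)
    · rw [hN, Submodule.span_le]
      rintro z ⟨i, rfl⟩
      rw [SetLike.mem_coe, Subalgebra.mem_toSubmodule]
      fin_cases i
      · exact Subalgebra.one_mem _
      · exact Algebra.subset_adjoin rfl
      · exact Subalgebra.mul_mem _ (Algebra.subset_adjoin rfl) (Algebra.subset_adjoin rfl)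
  rw [← Subalgebra.finrank_toSubmodule, hadj, hN, finrank_span_eq_card li]
  simp


theorem li_one_y_yy (F : Type) [Field F] (d : Fin 3 → F) (α : F) (hα : α ≠ 0) :
    LinearIndependent F ![(1 : Matrix (Fin 3) (Fin 3) F), Matrix.diagonal d + α • cyc F,
      (Matrix.diagonal d + α • cyc F) * (Matrix.diagonal d + α • cyc F)] := by
  rw [Fintype.linearIndependent_iff]
  intro c hc
  rw [Fin.sum_univ_three] at hc
  simp only [Matrix.cons_val_zero, Matrix.cons_val_one, Matrix.head_cons,
    Matrix.cons_val_two, Matrix.tail_cons] at hc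
  have e := fun i j => Matrix.ext_iff.2 hc i j
  have h02 := e 0 2
  have h01 := e 0 1
  have h00 := e 0 0
  simp [Matrix.add_apply, Matrix.smul_apply, Matrix.mul_apply, Fin.sum_univ_three,
    Matrix.one_apply, Matrix.diagonal_apply, cyc, Matrix.of_apply, smul_eq_mul,
    Matrix.zero_apply] at h02 h01 h00
  have hc2 : c 2 = 0 := h02.resolve_right hα
  rw [hc2] at h01 h00
  have h01' : c 1 * α = 0 := by linear_combination h01
  have hc1 : c 1 = 0 := by
    rcases mul_eq_zero.1 h01' with h | h
    · exact h
    · exact absurd h hα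
  rw [hc1] at h00
  have hc0 : c 0 = 0 := by linear_combination h00
  intro i
  fin_cases i <;> assumption


def sbm (F : Type) [Field F] (i j : Fin 3) : Matrix (Fin 3) (Fin 3) F :=
  Matrix.of fun a b => if a = i ∧ b = j then 1 else 0

theorem gen_lemma (F : Type) [Field F] (d : Fin 3 → F) (α : F) (hα : α ≠ 0)
    (S : Submodule F (Matrix (Fin 3) (Fin 3) F))
    (h1 : (1 : Matrix (Fin 3) (Fin 3) F) ∈ S)
    (hdiag : ∀ x : Fin 3 → F, Matrix.diagonal x ∈ S)
    (hyS : Matrix.diagonal d + α • cyc F ∈ S)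
    (hU : ∀ a ∈ S, ∀ b ∈ S, a * b * a ∈ S) :
    S = ⊤ := by
  classical
  have habc : ∀ a ∈ S, ∀ b ∈ S, ∀ c ∈ S, a * b * c + c * b * a ∈ S := by
    intro a ha b hb c hcs
    have k1 := hU (a + c) (S.add_mem ha hcs) b hb
    have k2 := hU a ha b hb
    have k3 := hU c hcs b hb
    have key : a * b * c + c * b * a = (a + c) * b * (a + c) - a * b * a - c * b * c := by
      noncomm_ring
    rw [key]
    exact S.sub_mem (S.sub_mem k1 k2) k3
  have hP : cyc F ∈ S := by
    have key : cyc F = α⁻¹ • ((Matrix.diagonal d + α • cyc F) - Matrix.diagonal d) := by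
      rw [add_sub_cancel_left, smul_smul, inv_mul_cancel₀ hα, one_smul]
    rw [key]
    exact S.smul_mem _ (S.sub_mem hyS (hdiag d))
  have hEd : ∀ i : Fin 3, sbm F i i ∈ S := by
    intro i
    have key : sbm F i i = Matrix.diagonal (fun k => if k = i then 1 else 0) := by
      ext a b
      by_cases hab : a = b <;> simp [sbm, Matrix.diagonal_apply, hab] <;> aesop
    rw [key]; exact hdiag _
  have mul3 : ∀ i j : Fin 3, j = i + 1 →
      sbm F i i * cyc F * sbm F j j + sbm F j j * cyc F * sbm F i i = sbm F i j := by
    intro i j hij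
    subst hij
    ext a b
    fin_cases i <;> fin_cases a <;> fin_cases b <;>
      simp [sbm, cyc, Matrix.mul_apply, Fin.sum_univ_three, Matrix.add_apply]
  have hE01 : sbm F 0 1 ∈ S := by
    have := habc _ (hEd 0) _ hP _ (hEd 1)
    rwa [mul3 0 1 rfl] at this
  have hE12 : sbm F 1 2 ∈ S := by
    have := habc _ (hEd 1) _ hP _ (hEd 2)
    rwa [mul3 1 2 rfl] at this
  have hE20 : sbm F 2 0 ∈ S := by
    have := habc _ (hEd 2) _ hP _ (hEd 0)
    rwa [mul3 2 0 rfl] at this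
  have hE02 : sbm F 0 2 ∈ S := by
    have := habc _ hE01 _ h1 _ hE12
    have key : sbm F 0 1 * 1 * sbm F 1 2 + sbm F 1 2 * 1 * sbm F 0 1 = sbm F 0 2 := by
      ext a b
      fin_cases a <;> fin_cases b <;>
        simp [sbm, Matrix.mul_apply, Fin.sum_univ_three, Matrix.add_apply]
    rwa [key] at this
  have hE10 : sbm F 1 0 ∈ S := by
    have := habc _ hE12 _ h1 _ hE20
    have key : sbm F 1 2 * 1 * sbm F 2 0 + sbm F 2 0 * 1 * sbm F 1 2 = sbm F 1 0 := by
      ext a b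
      fin_cases a <;> fin_cases b <;>
        simp [sbm, Matrix.mul_apply, Fin.sum_univ_three, Matrix.add_apply]
    rwa [key] at this
  have hE21 : sbm F 2 1 ∈ S := by
    have := habc _ hE20 _ h1 _ hE01
    have key : sbm F 2 0 * 1 * sbm F 0 1 + sbm F 0 1 * 1 * sbm F 2 0 = sbm F 2 1 := by
      ext a b
      fin_cases a <;> fin_cases b <;>
        simp [sbm, Matrix.mul_apply, Fin.sum_univ_three, Matrix.add_apply]
    rwa [key] at this
  have hE : ∀ i j : Fin 3, sbm F i j ∈ S := by
    intro i j
    fin_cases i <;> fin_cases j <;>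
      first
        | exact hEd _ | exact hE01 | exact hE02 | exact hE10 | exact hE12
        | exact hE20 | exact hE21
  rw [eq_top_iff]
  intro m _
  have key : m = ∑ i : Fin 3, ∑ j : Fin 3, m i j • sbm F i j := by
    ext a b
    simp only [Matrix.sum_apply, Matrix.smul_apply, sbm, Matrix.of_apply, smul_eq_mul]
    fin_cases a <;> fin_cases b <;> simp [Fin.sum_univ_three]
  rw [key]
  exact Submodule.sum_mem S fun i _ => Submodule.sum_mem S fun j _ =>
    S.smul_mem _ (hE i j)


theorem inj_of_gen (F : Type) [Field F] (d : Fin 3 → F)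
    (hgen : ∀ x : Fin 3 → F,
      (Matrix.diagonal x : Matrix (Fin 3) (Fin 3) F)
        ∈ Algebra.adjoin F {(Matrix.diagonal d : Matrix (Fin 3) (Fin 3) F)}) :
    Function.Injective d := by
  classical
  intro i j hij
  by_contra hne
  have hx := hgen fun k => if k = i then 1 else 0
  rw [Algebra.adjoin_singleton_eq_range_aeval] at hx
  obtain ⟨q, hq⟩ := (AlgHom.mem_range _).1 hx
  have h1 : q.eval (d i) = 1 := by
    have h := diag_entry_aeval F d q i
    rw [hq] at h
    simpa using h.symm
  have h2 : q.eval (d j) = 0 := by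
    have h := diag_entry_aeval F d q j
    rw [hq] at h
    rw [Matrix.diagonal_apply_eq] at h
    rw [if_neg (fun hji => hne hji.symm)] at h
    exact h.symm
  rw [← hij, h1] at h2
  exact one_ne_zero h2

/-- Let `F` be an infinite field and `E` the cubic étale subalgebra of diagonal
matrices in `Mat₃(F)`.  For any `u₀ = diagonal d` generating `E` (i.e. `F[u₀] ⊇ E`), there is
`α ∈ F^×` such that `y := u₀ + α j₁` (with `j₁` the cyclic permutation matrix) generates a cubic
étale subalgebra `F[y]` (its minimal polynomial is separable of degree 3, so
`Module.finrank F F[y] = 3`), and `Mat₃(F)⁺` is generated as a cubic Jordan algebra by the two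
cubic étale subalgebras `E` and `F[y]`: every `F`-subspace containing `1`, all diagonal
matrices, and `F[y]`, and closed under the Jordan `U`-operator `U_a b = a b a`, is all of
`Mat₃(F)`. -/
theorem stmt_9 (F : Type) [Field F] [Infinite F]
    (d : Fin 3 → F)
    (hgen : ∀ x : Fin 3 → F,
      (Matrix.diagonal x : Matrix (Fin 3) (Fin 3) F)
        ∈ Algebra.adjoin F {(Matrix.diagonal d : Matrix (Fin 3) (Fin 3) F)}) :
    ∃ α : F, α ≠ 0 ∧
      ((minpoly F (Matrix.diagonal d + α • cyc F)).natDegree = 3 ∧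
        (minpoly F (Matrix.diagonal d + α • cyc F)).Separable ∧
        Module.finrank F
          (Algebra.adjoin F {Matrix.diagonal d + α • cyc F}) = 3) ∧
      (∀ S : Submodule F (Matrix (Fin 3) (Fin 3) F),
        (1 : Matrix (Fin 3) (Fin 3) F) ∈ S →
        (∀ x : Fin 3 → F, (Matrix.diagonal x : Matrix (Fin 3) (Fin 3) F) ∈ S) →
        (∀ z ∈ Algebra.adjoin F {Matrix.diagonal d + α • cyc F}, z ∈ S) →
        (∀ a ∈ S, ∀ b ∈ S, a * b * a ∈ S) →
        S = ⊤) := by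
  have hd := inj_of_gen F d hgen
  obtain ⟨α, hα0, hsep⟩ := exists_good_alpha F d hd
  have li := li_one_y_yy F d α hα0
  refine ⟨α, hα0, stmt9_min F d α hα0 hsep li, ?_⟩
  intro S h1 hdiag hadj hU
  exact gen_lemma F d α hα0 S h1 hdiag (hadj _ (Algebra.subset_adjoin rfl)) hU
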